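/- arXiv:2412.08042 — 2 statements merged into one kernel-verified Lean document; each statement's English description precedes it below -/
import Mathlib

section
/- Weight normalization with treatment indicators (first display in the proof of Theorem 5): Assume (A3). Then for every a̲ ∈ {0,1}^m and for each W ∈ {W_sw, W_rsw^(m), W_psw^(m)}: 𝔼[1{A̲(K−m)=a̲} · W] = P(A̲(K−m)=a̲). -/
open MeasureTheory Finset
open scoped Classical

namespace MSMPaper

noncomputable section

variable {Ω : Type*} [MeasurableSpace Ω] {𝓛 : Type*}

/-- Conditional probability `P(E | F) = P(E ∩ F) / P(F)` as a real number
(junk value `0` when `P F = 0`). -/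
def cP (P : Measure Ω) (E F : Set Ω) : ℝ := (P (E ∩ F)).toReal / (P F).toReal

variable {K : ℕ}

/-- Event `Ā(t−1) = b̄` (treatment history up to, not including, time `t`). -/
def Apast (A : Fin K → Ω → Bool) (t : ℕ) (b : Fin K → Bool) : Set Ω :=
  {ω | ∀ k : Fin K, (k : ℕ) < t → A k ω = b k}

/-- Event `L̄(t) = l̄` (covariate history up to and including time `t`). -/
def Lpast (L : Fin K → Ω → 𝓛) (t : ℕ) (l : Fin K → 𝓛) : Set Ω :=
  {ω | ∀ k : Fin K, (k : ℕ) ≤ t → L k ω = l k}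

/-- Event `A̲(s, t−1) = b` (treatment history from time `s` up to, not including, `t`). -/
def Aseg (A : Fin K → Ω → Bool) (s t : ℕ) (b : Fin K → Bool) : Set Ω :=
  {ω | ∀ k : Fin K, s ≤ (k : ℕ) → (k : ℕ) < t → A k ω = b k}

/-- Event `A̲(K−m) = a̲` for a (last-`m`) treatment vector `as`. -/
def EtrV (A : Fin K → Ω → Bool) (m : ℕ) (as : Fin K → Bool) : Set Ω :=
  {ω | ∀ k : Fin K, K - m ≤ (k : ℕ) → A k ω = as k}

/-- Event `A̲(K−m) = a_m` (constant `a` on the last `m` coordinates). -/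
def Etr (A : Fin K → Ω → Bool) (m : ℕ) (a : Bool) : Set Ω :=
  EtrV A m (fun _ => a)

/-- Stabilized weights `W_sw`. -/
def Wsw (P : Measure Ω) (A : Fin K → Ω → Bool) (L : Fin K → Ω → 𝓛) : Ω → ℝ :=
  fun ω => ∏ k : Fin K,
    cP P {ω' | A k ω' = A k ω} (Apast A (k : ℕ) (fun j => A j ω)) /
      cP P {ω' | A k ω' = A k ω}
        (Lpast L (k : ℕ) (fun j => L j ω) ∩ Apast A (k : ℕ) (fun j => A j ω))

/-- Restricted stabilized weights `W_rsw^(m)`. -/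
def Wrsw (P : Measure Ω) (A : Fin K → Ω → Bool) (L : Fin K → Ω → 𝓛) (m : ℕ) : Ω → ℝ :=
  fun ω => ∏ k ∈ Finset.univ.filter (fun k : Fin K => K - m ≤ (k : ℕ)),
    cP P {ω' | A k ω' = A k ω} (Aseg A (K - m) (k : ℕ) (fun j => A j ω)) /
      cP P {ω' | A k ω' = A k ω}
        (Lpast L (k : ℕ) (fun j => L j ω) ∩ Apast A (k : ℕ) (fun j => A j ω))

/-- Partial stabilized weights `W_psw^(m)`. -/
def Wpsw (P : Measure Ω) (A : Fin K → Ω → Bool) (L : Fin K → Ω → 𝓛) (m : ℕ) : Ω → ℝ :=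
  fun ω => ∏ k ∈ Finset.univ.filter (fun k : Fin K => K - m ≤ (k : ℕ)),
    cP P {ω' | A k ω' = A k ω} (Apast A (k : ℕ) (fun j => A j ω)) /
      cP P {ω' | A k ω' = A k ω}
        (Lpast L (k : ℕ) (fun j => L j ω) ∩ Apast A (k : ℕ) (fun j => A j ω))

/-- IP-weighted contrast `θ_W^(m)`. -/
def θW (P : Measure Ω) (A : Fin K → Ω → Bool) (m : ℕ) (W Y : Ω → ℝ) : ℝ :=
  (∫ ω in Etr A m true, W ω * Y ω ∂P) / (∫ ω in Etr A m true, W ω ∂P) -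
    (∫ ω in Etr A m false, W ω * Y ω ∂P) / (∫ ω in Etr A m false, W ω ∂P)

/-- `rev j` is the time index `K − 1 − j`; the paper's coefficient `ψ_{j+1}`
multiplies `a(K − (j+1)) = a(rev j)`. -/
def rev (j : Fin K) : Fin K := ⟨K - 1 - (j : ℕ), by have := j.isLt; omega⟩

/-- `θ^(K) = 𝔼[Y^{1_K}] − 𝔼[Y^{0_K}]`. -/
def θKfull (P : Measure Ω) (Ypot : (Fin K → Bool) → Ω → ℝ) : ℝ :=
  (∫ ω, Ypot (fun _ => true) ω ∂P) - ∫ ω, Ypot (fun _ => false) ω ∂P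

/-- (A1) consistency. -/
def A1ok (A : Fin K → Ω → Bool) (Y : Ω → ℝ) (Ypot : (Fin K → Bool) → Ω → ℝ) : Prop :=
  ∀ (a : Fin K → Bool) (ω : Ω), (∀ k, A k ω = a k) → Y ω = Ypot a ω

/-- (A2) sequential exchangeability. -/
def A2ok (P : Measure Ω) (A : Fin K → Ω → Bool) (L : Fin K → Ω → 𝓛)
    (Ypot : (Fin K → Bool) → Ω → ℝ) : Prop :=
  ∀ (t : Fin K) (a : Fin K → Bool) (B : Set ℝ), MeasurableSet B →
    ∀ (av : Bool) (l : Fin K → 𝓛) (b : Fin K → Bool),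
      0 < P (Lpast L (t : ℕ) l ∩ Apast A (t : ℕ) b) →
      cP P ({ω | Ypot a ω ∈ B} ∩ {ω | A t ω = av}) (Lpast L (t : ℕ) l ∩ Apast A (t : ℕ) b) =
        cP P {ω | Ypot a ω ∈ B} (Lpast L (t : ℕ) l ∩ Apast A (t : ℕ) b) *
          cP P {ω | A t ω = av} (Lpast L (t : ℕ) l ∩ Apast A (t : ℕ) b)

/-- (A3) positivity. -/
def A3ok (P : Measure Ω) (A : Fin K → Ω → Bool) (L : Fin K → Ω → 𝓛) : Prop :=
  ∀ (t : Fin K) (av : Bool) (l : Fin K → 𝓛) (b : Fin K → Bool),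
    0 < P (Lpast L (t : ℕ) l ∩ Apast A (t : ℕ) b) →
    0 < cP P {ω | A t ω = av} (Lpast L (t : ℕ) l ∩ Apast A (t : ℕ) b)

/-- The marginal structural model `𝔼[Y^{ā}] = ψ₀ + Σ_{j=1}^K ψ_j a(K−j)`;
here `ψ j` is the paper's `ψ_{j+1}`, the coefficient of `a(K−1−j)`. -/
def MSMeq (P : Measure Ω) (Ypot : (Fin K → Bool) → Ω → ℝ) (ψ0 : ℝ) (ψ : Fin K → ℝ) : Prop :=
  ∀ a : Fin K → Bool,
    (∫ ω, Ypot a ω ∂P) = ψ0 + ∑ j : Fin K, ψ j * (if a (rev j) = true then 1 else 0)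

/-- (A5) conditional MSM given the past treatment history `Ā(K−m−1)`. -/
def A5ok (P : Measure Ω) (A : Fin K → Ω → Bool) (Ypot : (Fin K → Bool) → Ω → ℝ)
    (m : ℕ) : Prop :=
  ∀ b : Fin K → Bool, 0 < P (Apast A (K - m) b) →
    ∃ (φ0 : ℝ) (φ : Fin K → ℝ), ∀ a : Fin K → Bool,
      (∫ ω in Apast A (K - m) b, Ypot a ω ∂P) / (P (Apast A (K - m) b)).toReal =
        φ0 + ∑ j : Fin K, φ j * (if a (rev j) = true then 1 else 0)

/-- `q_{j+1} = P(A(K−1−j)=1 | A̲(K−m)=1_m) − P(A(K−1−j)=1 | A̲(K−m)=0_m)`. -/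
def qcoef (P : Measure Ω) (A : Fin K → Ω → Bool) (m : ℕ) (j : Fin K) : ℝ :=
  cP P {ω | A (rev j) ω = true} (Etr A m true) -
    cP P {ω | A (rev j) ω = true} (Etr A m false)

end

section WeightNormAux

variable {Ω : Type*} [MeasurableSpace Ω] {𝓛 : Type*} {K : ℕ}

def Cpre (L : Fin K → Ω → 𝓛) (A : Fin K → Ω → Bool) (t : ℕ) (l : Fin K → 𝓛)
    (b : Fin K → Bool) : Set Ω :=
  {ω | ∀ k : Fin K, (k : ℕ) < t → (L k ω = l k ∧ A k ω = b k)}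

lemma measurableSet_forall_fin {q : Fin K → Ω → Prop}
    (h : ∀ k, MeasurableSet {ω | q k ω}) : MeasurableSet {ω | ∀ k, q k ω} := by
  have he : {ω | ∀ k, q k ω} = ⋂ k, {ω | q k ω} := by ext ω; simp
  rw [he]; exact MeasurableSet.iInter h

lemma ms_imp {p : Prop} {s : Set Ω} (h : MeasurableSet s) :
    MeasurableSet {ω | p → ω ∈ s} := by
  by_cases hp : p
  · simpa [hp] using h
  · simp [hp]

lemma ms_eq {α : Type*} [MeasurableSpace α] [MeasurableSingletonClass α] {f : Ω → α}
    (hf : Measurable f) (a : α) : MeasurableSet {ω | f ω = a} :=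
  hf (measurableSet_singleton a)

variable [MeasurableSpace 𝓛] [MeasurableSingletonClass 𝓛] [Fintype 𝓛] [Nonempty 𝓛]

lemma ms_Apast {A : Fin K → Ω → Bool} (hA : ∀ k, Measurable (A k)) (t : ℕ)
    (b : Fin K → Bool) : MeasurableSet (Apast A t b) :=
  measurableSet_forall_fin fun k => ms_imp (ms_eq (hA k) (b k))

lemma ms_Lpast {L : Fin K → Ω → 𝓛} (hL : ∀ k, Measurable (L k)) (t : ℕ)
    (l : Fin K → 𝓛) : MeasurableSet (Lpast L t l) :=
  measurableSet_forall_fin fun k => ms_imp (ms_eq (hL k) (l k))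

lemma ms_Aseg {A : Fin K → Ω → Bool} (hA : ∀ k, Measurable (A k)) (s t : ℕ)
    (b : Fin K → Bool) : MeasurableSet (Aseg A s t b) :=
  measurableSet_forall_fin fun k => ms_imp (ms_imp (ms_eq (hA k) (b k)))

lemma ms_EtrV {A : Fin K → Ω → Bool} (hA : ∀ k, Measurable (A k)) (m : ℕ)
    (as : Fin K → Bool) : MeasurableSet (EtrV A m as) :=
  measurableSet_forall_fin fun k => ms_imp (ms_eq (hA k) (as k))

lemma ms_Cpre {L : Fin K → Ω → 𝓛} {A : Fin K → Ω → Bool}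
    (hL : ∀ k, Measurable (L k)) (hA : ∀ k, Measurable (A k)) (t : ℕ)
    (l : Fin K → 𝓛) (b : Fin K → Bool) : MeasurableSet (Cpre L A t l b) :=
  measurableSet_forall_fin fun k => ms_imp ((ms_eq (hL k) (l k)).inter (ms_eq (hA k) (b k)))

lemma cP_mul (P : Measure Ω) [IsFiniteMeasure P] (S X : Set Ω) :
    (P X).toReal * cP P S X = (P (S ∩ X)).toReal := by
  unfold cP
  rcases eq_or_ne (P X) 0 with h | h
  · have h2 : P (S ∩ X) = 0 := measure_mono_null Set.inter_subset_right h
    simp [h, h2]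
  · have hx : (P X).toReal ≠ 0 := by
      simp [ENNReal.toReal_ne_zero, h, measure_ne_top]
    field_simp

lemma cP_div {P : Measure Ω} [IsFiniteMeasure P] {S X : Set Ω} (h : 0 < cP P S X) :
    (P (S ∩ X)).toReal / cP P S X = (P X).toReal := by
  rw [← cP_mul P S X, mul_div_assoc, div_self h.ne', mul_one]

lemma sum_measure_partition {α : Type*} [Fintype α] [MeasurableSpace α]
    [MeasurableSingletonClass α]
    (P : Measure Ω) [IsFiniteMeasure P]
    (f : Fin K → Ω → α) (hf : ∀ k, Measurable (f k))
    (q : Fin K → Prop) (v₀ : Fin K → α) {F : Set Ω} (hF : MeasurableSet F)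
    (s : Finset (Fin K → α)) (hsmem : ∀ v, v ∈ s ↔ ∀ k, ¬ q k → v k = v₀ k) :
    ∑ v ∈ s,
      (P ({ω | ∀ k, q k → f k ω = v k} ∩ F)).toReal = (P F).toReal := by
  have hd : (↑s : Set (Fin K → α)).PairwiseDisjoint
      (fun v => {ω | ∀ k, q k → f k ω = v k} ∩ F) := by
    intro v hv w hw hvw
    refine Set.disjoint_left.2 ?_
    rintro ω ⟨h1, _⟩ ⟨h2, _⟩
    apply hvw
    funext k
    by_cases hq : q k
    · rw [← h1 k hq, ← h2 k hq]
    · rw [(hsmem v).1 hv k hq, (hsmem w).1 hw k hq]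
  have hm : ∀ v ∈ s, MeasurableSet ({ω | ∀ k, q k → f k ω = v k} ∩ F) :=
    fun v _ => (measurableSet_forall_fin fun k => ms_imp (ms_eq (hf k) (v k))).inter hF
  have hu : ⋃ v ∈ s, ({ω | ∀ k, q k → f k ω = v k} ∩ F) = F := by
    ext ω
    simp only [Set.mem_iUnion, Set.mem_inter_iff, Set.mem_setOf_eq, exists_prop]
    constructor
    · rintro ⟨v, _, _, h⟩; exact h
    · intro h
      exact ⟨fun k => if hq : q k then f k ω else v₀ k,
        (hsmem _).2 fun k hk => dif_neg hk, fun k hk => by simp [hk], h⟩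
  rw [← ENNReal.toReal_sum (fun _ _ => measure_ne_top _ _), ← measure_biUnion_finset hd hm, hu]

section Tele

variable (P : Measure Ω) [IsProbabilityMeasure P] (A : Fin K → Ω → Bool)

lemma tele_Apast (b : Fin K → Bool) :
    ∀ t, t ≤ K → ∏ k ∈ Finset.univ.filter (fun k : Fin K => (k : ℕ) < t),
        cP P {ω' | A k ω' = b k} (Apast A (k : ℕ) b) = (P (Apast A t b)).toReal := by
  intro t
  induction t with
  | zero =>
    intro _
    have h1 : Finset.univ.filter (fun k : Fin K => (k : ℕ) < 0) = ∅ := by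
      ext k; simp
    have h2 : Apast A 0 b = Set.univ := by
      ext ω; simp [Apast]
    simp [h1, h2]
  | succ t ih =>
    intro ht
    have htK : t < K := ht
    have hv : ((⟨t, htK⟩ : Fin K) : ℕ) = t := rfl
    have hins : Finset.univ.filter (fun k : Fin K => (k : ℕ) < t + 1)
        = insert ⟨t, htK⟩ (Finset.univ.filter (fun k : Fin K => (k : ℕ) < t)) := by
      ext k; simp [Fin.ext_iff, hv]; omega
    have hτ : (⟨t, htK⟩ : Fin K) ∉ Finset.univ.filter (fun k : Fin K => (k : ℕ) < t) := by
      simp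
    have hset : {ω' | A ⟨t, htK⟩ ω' = b ⟨t, htK⟩} ∩ Apast A t b = Apast A (t + 1) b := by
      ext ω
      simp only [Apast, Set.mem_inter_iff, Set.mem_setOf_eq]
      constructor
      · rintro ⟨h1, h2⟩ k hk
        rcases Nat.lt_succ_iff_lt_or_eq.1 hk with h | h
        · exact h2 k h
        · have hkτ : k = ⟨t, htK⟩ := Fin.ext h
          simp [hkτ, h1]
      · intro h
        exact ⟨h ⟨t, htK⟩ (by omega), fun k hk => h k (by omega)⟩
    rw [hins, Finset.prod_insert hτ, ih (le_of_lt htK), mul_comm]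
    have := cP_mul P {ω' | A ⟨t, htK⟩ ω' = b ⟨t, htK⟩} (Apast A t b)
    rw [hv, this, hset]

lemma tele_Aseg (b : Fin K → Bool) (s : ℕ) :
    ∀ t, s ≤ t → t ≤ K →
      ∏ k ∈ Finset.univ.filter (fun k : Fin K => s ≤ (k : ℕ) ∧ (k : ℕ) < t),
        cP P {ω' | A k ω' = b k} (Aseg A s (k : ℕ) b) = (P (Aseg A s t b)).toReal := by
  intro t hst
  induction t, hst using Nat.le_induction with
  | base =>
    intro _
    have h1 : Finset.univ.filter (fun k : Fin K => s ≤ (k : ℕ) ∧ (k : ℕ) < s) = ∅ := by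
      ext k; simp only [Finset.mem_filter, Finset.mem_univ, Finset.notMem_empty, true_and, iff_false, not_and, not_lt]; omega
    have h2 : Aseg A s s b = Set.univ := by
      ext ω; simp only [Aseg, Set.mem_setOf_eq, Set.mem_univ, iff_true]
      intro k h1' h2'; omega
    simp [h1, h2]
  | succ t hst ih =>
    intro ht
    have htK : t < K := ht
    have hv : ((⟨t, htK⟩ : Fin K) : ℕ) = t := rfl
    have hins : Finset.univ.filter (fun k : Fin K => s ≤ (k : ℕ) ∧ (k : ℕ) < t + 1)
        = insert ⟨t, htK⟩ (Finset.univ.filter (fun k : Fin K => s ≤ (k : ℕ) ∧ (k : ℕ) < t)) := by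
      ext k; simp [Fin.ext_iff, hv]; omega
    have hτ : (⟨t, htK⟩ : Fin K) ∉
        Finset.univ.filter (fun k : Fin K => s ≤ (k : ℕ) ∧ (k : ℕ) < t) := by
      simp [hv]
    have hset : {ω' | A ⟨t, htK⟩ ω' = b ⟨t, htK⟩} ∩ Aseg A s t b = Aseg A s (t + 1) b := by
      ext ω
      simp only [Aseg, Set.mem_inter_iff, Set.mem_setOf_eq]
      constructor
      · rintro ⟨h1, h2⟩ k hks hk
        rcases Nat.lt_succ_iff_lt_or_eq.1 hk with h | h
        · exact h2 k hks h
        · have hkτ : k = ⟨t, htK⟩ := Fin.ext h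
          simp [hkτ, h1]
      · intro h
        exact ⟨h ⟨t, htK⟩ hst (by omega), fun k hks hk => h k hks (by omega)⟩
    rw [hins, Finset.prod_insert hτ, ih (le_of_lt htK), mul_comm]
    have := cP_mul P {ω' | A ⟨t, htK⟩ ω' = b ⟨t, htK⟩} (Aseg A s t b)
    rw [hv, this, hset]

lemma tele_psw (b : Fin K → Bool) (s : ℕ) :
    ∀ t, s ≤ t → t ≤ K →
      (∏ k ∈ Finset.univ.filter (fun k : Fin K => s ≤ (k : ℕ) ∧ (k : ℕ) < t),
        cP P {ω' | A k ω' = b k} (Apast A (k : ℕ) b)) * (P (Apast A s b)).toReal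
        = (P (Apast A t b)).toReal := by
  intro t hst
  induction t, hst using Nat.le_induction with
  | base =>
    intro _
    have h1 : Finset.univ.filter (fun k : Fin K => s ≤ (k : ℕ) ∧ (k : ℕ) < s) = ∅ := by
      ext k; simp only [Finset.mem_filter, Finset.mem_univ, Finset.notMem_empty, true_and, iff_false, not_and, not_lt]; omega
    simp [h1]
  | succ t hst ih =>
    intro ht
    have htK : t < K := ht
    have hv : ((⟨t, htK⟩ : Fin K) : ℕ) = t := rfl
    have hins : Finset.univ.filter (fun k : Fin K => s ≤ (k : ℕ) ∧ (k : ℕ) < t + 1)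
        = insert ⟨t, htK⟩ (Finset.univ.filter (fun k : Fin K => s ≤ (k : ℕ) ∧ (k : ℕ) < t)) := by
      ext k; simp [Fin.ext_iff, hv]; omega
    have hτ : (⟨t, htK⟩ : Fin K) ∉
        Finset.univ.filter (fun k : Fin K => s ≤ (k : ℕ) ∧ (k : ℕ) < t) := by
      simp [hv]
    have hset : {ω' | A ⟨t, htK⟩ ω' = b ⟨t, htK⟩} ∩ Apast A t b = Apast A (t + 1) b := by
      ext ω
      simp only [Apast, Set.mem_inter_iff, Set.mem_setOf_eq]
      constructor
      · rintro ⟨h1, h2⟩ k hk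
        rcases Nat.lt_succ_iff_lt_or_eq.1 hk with h | h
        · exact h2 k h
        · have hkτ : k = ⟨t, htK⟩ := Fin.ext h
          simp [hkτ, h1]
      · intro h
        exact ⟨h ⟨t, htK⟩ (by omega), fun k hk => h k (by omega)⟩
    rw [hins, Finset.prod_insert hτ, mul_assoc, ih (le_of_lt htK), mul_comm]
    have := cP_mul P {ω' | A ⟨t, htK⟩ ω' = b ⟨t, htK⟩} (Apast A t b)
    rw [hv, this, hset]

end Tele

lemma sum_measure_fiber {α : Type*} [Fintype α] [MeasurableSpace α] [MeasurableSingletonClass α]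
    (P : Measure Ω) [IsFiniteMeasure P] {E : Set Ω} (hE : MeasurableSet E)
    {f : Ω → α} (hf : Measurable f) :
    ∑ x : α, (P (E ∩ {ω | f ω = x})).toReal = (P E).toReal := by
  have hd : (↑(Finset.univ : Finset α) : Set α).PairwiseDisjoint
      (fun x => E ∩ {ω | f ω = x}) := by
    intro x _ y _ hxy
    refine Set.disjoint_left.2 ?_
    rintro ω ⟨_, h1⟩ ⟨_, h2⟩
    exact hxy (h1.symm.trans h2)
  have hm : ∀ x ∈ (Finset.univ : Finset α), MeasurableSet (E ∩ {ω | f ω = x}) :=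
    fun x _ => hE.inter (ms_eq hf x)
  have hu : ⋃ x ∈ (Finset.univ : Finset α), (E ∩ {ω | f ω = x}) = E := by
    ext ω; simp
  rw [← ENNReal.toReal_sum (fun _ _ => measure_ne_top _ _), ← measure_biUnion_finset hd hm, hu]

lemma key_R (P : Measure Ω) [IsProbabilityMeasure P]
    (A : Fin K → Ω → Bool) (L : Fin K → Ω → 𝓛)
    (hA : ∀ k, Measurable (A k)) (hL : ∀ k, Measurable (L k))
    (hA3 : A3ok P A L) (b : Fin K → Bool) :
    ∀ n, n ≤ K → ∀ l : Fin K → 𝓛,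
      ∑ g ∈ Finset.univ.filter
          (fun g : Fin K → 𝓛 => ∀ k : Fin K, (k : ℕ) < K - n → g k = l k),
        (P (Cpre L A K g b)).toReal /
          ∏ k ∈ Finset.univ.filter (fun k : Fin K => K - n ≤ (k : ℕ)),
            cP P {ω' | A k ω' = b k} (Lpast L (k : ℕ) g ∩ Apast A (k : ℕ) b)
        = (P (Cpre L A (K - n) l b)).toReal := by
  intro n
  induction n with
  | zero =>
    intro _ l
    have hfg : Finset.univ.filter
        (fun g : Fin K → 𝓛 => ∀ k : Fin K, (k : ℕ) < K - 0 → g k = l k) = {l} := by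
      ext g
      simp only [Finset.mem_filter, Finset.mem_univ, true_and, Finset.mem_singleton]
      constructor
      · intro h; funext k; exact h k (by have := k.isLt; omega)
      · rintro rfl k _; rfl
    have hfk : Finset.univ.filter (fun k : Fin K => K - 0 ≤ (k : ℕ)) = ∅ := by
      ext k
      simp only [Finset.mem_filter, Finset.mem_univ, true_and, Finset.notMem_empty,
        iff_false, not_le]
      have := k.isLt; omega
    rw [hfg, hfk, Finset.sum_singleton, Finset.prod_empty, div_one, Nat.sub_zero]
  | succ n ih =>
    intro hn l
    have hnK : n ≤ K := by omega
    have htK : K - (n + 1) < K := by omega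
    set t := K - (n + 1) with ht
    have htn : t + 1 = K - n := by omega
    have hv : ((⟨t, htK⟩ : Fin K) : ℕ) = t := rfl
    have hne : ∀ k : Fin K, (k : ℕ) < t → k ≠ ⟨t, htK⟩ := by
      intro k hk he
      subst he
      exact absurd hk (lt_irrefl _)
    have hvlt : ((⟨t, htK⟩ : Fin K) : ℕ) < K - n := by omega
    -- fibers
    have hfx : ∀ x : 𝓛,
        (Finset.univ.filter
          (fun g : Fin K → 𝓛 => ∀ k : Fin K, (k : ℕ) < t → g k = l k)).filter
            (fun g => g ⟨t, htK⟩ = x)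
        = Finset.univ.filter
            (fun g : Fin K → 𝓛 => ∀ k : Fin K, (k : ℕ) < K - n → g k = Function.update l ⟨t, htK⟩ x k) := by
      intro x; ext g
      simp only [Finset.mem_filter, Finset.mem_univ, true_and, and_assoc]
      constructor
      · rintro ⟨h1, h2⟩ k hk
        rcases (by omega : (k : ℕ) < t ∨ (k : ℕ) = t) with h | h
        · rw [Function.update_of_ne (hne k h)]
          exact h1 k h
        · have hkτ : k = ⟨t, htK⟩ := Fin.ext h
          subst hkτ
          rw [Function.update_self]
          exact h2
      · intro h
        constructor
        · intro k hk
          have h2 := h k (by omega)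
          rw [Function.update_of_ne (hne k hk)] at h2
          exact h2
        · have h2 := h ⟨t, htK⟩ hvlt
          rw [Function.update_self] at h2
          exact h2
    have hinsk : Finset.univ.filter (fun k : Fin K => t ≤ (k : ℕ))
        = insert ⟨t, htK⟩ (Finset.univ.filter (fun k : Fin K => K - n ≤ (k : ℕ))) := by
      ext k; simp [Fin.ext_iff, hv]; omega
    have hτnot : (⟨t, htK⟩ : Fin K) ∉
        Finset.univ.filter (fun k : Fin K => K - n ≤ (k : ℕ)) := by
      simp [hv]; omega
    calc
      ∑ g ∈ Finset.univ.filter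
          (fun g : Fin K → 𝓛 => ∀ k : Fin K, (k : ℕ) < t → g k = l k),
        (P (Cpre L A K g b)).toReal /
          ∏ k ∈ Finset.univ.filter (fun k : Fin K => t ≤ (k : ℕ)),
            cP P {ω' | A k ω' = b k} (Lpast L (k : ℕ) g ∩ Apast A (k : ℕ) b)
          = ∑ x : 𝓛, ∑ g ∈ (Finset.univ.filter
              (fun g : Fin K → 𝓛 => ∀ k : Fin K, (k : ℕ) < t → g k = l k)).filter
                (fun g => g ⟨t, htK⟩ = x),
              (P (Cpre L A K g b)).toReal /
                ∏ k ∈ Finset.univ.filter (fun k : Fin K => t ≤ (k : ℕ)),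
                  cP P {ω' | A k ω' = b k} (Lpast L (k : ℕ) g ∩ Apast A (k : ℕ) b) :=
        (Finset.sum_fiberwise _ _ _).symm
      _ = ∑ x : 𝓛, (P (Lpast L t (Function.update l ⟨t, htK⟩ x) ∩ Apast A t b)).toReal := by
        refine Finset.sum_congr rfl fun x _ => ?_
        rw [hfx x]
        have hstep : ∀ g ∈ Finset.univ.filter
            (fun g : Fin K → 𝓛 => ∀ k : Fin K, (k : ℕ) < K - n → g k = Function.update l ⟨t, htK⟩ x k),
            (P (Cpre L A K g b)).toReal /
              ∏ k ∈ Finset.univ.filter (fun k : Fin K => t ≤ (k : ℕ)),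
                cP P {ω' | A k ω' = b k} (Lpast L (k : ℕ) g ∩ Apast A (k : ℕ) b)
            = ((P (Cpre L A K g b)).toReal /
                ∏ k ∈ Finset.univ.filter (fun k : Fin K => K - n ≤ (k : ℕ)),
                  cP P {ω' | A k ω' = b k} (Lpast L (k : ℕ) g ∩ Apast A (k : ℕ) b)) /
                cP P {ω' | A ⟨t, htK⟩ ω' = b ⟨t, htK⟩} (Lpast L t (Function.update l ⟨t, htK⟩ x) ∩ Apast A t b) := by
          intro g hg
          have hg' := (Finset.mem_filter.1 hg).2
          have hLset : Lpast L t g = Lpast L t (Function.update l ⟨t, htK⟩ x) := by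
            have hgl : ∀ k : Fin K, (k : ℕ) ≤ t → g k = Function.update l ⟨t, htK⟩ x k :=
              fun k hk => hg' k (by omega)
            ext ω
            simp only [Lpast, Set.mem_setOf_eq]
            constructor
            · intro h k hk; rw [← hgl k hk]; exact h k hk
            · intro h k hk; rw [hgl k hk]; exact h k hk
          rw [hinsk, Finset.prod_insert hτnot]
          simp only [hv]
          rw [hLset, div_div, mul_comm]
        rw [Finset.sum_congr rfl hstep, ← Finset.sum_div, ih hnK (Function.update l ⟨t, htK⟩ x)]
        -- now : (P (Cpre L A (K - n) (Function.update l ⟨t, htK⟩ x) b)).toReal / cP ... = (P (Lpast ...)).toReal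
        have hCD : Cpre L A (K - n) (Function.update l ⟨t, htK⟩ x) b
            = {ω | A ⟨t, htK⟩ ω = b ⟨t, htK⟩} ∩ (Lpast L t (Function.update l ⟨t, htK⟩ x) ∩ Apast A t b) := by
          ext ω
          simp only [Cpre, Lpast, Apast, Set.mem_inter_iff, Set.mem_setOf_eq]
          constructor
          · intro h
            exact ⟨(h ⟨t, htK⟩ (by omega)).2, fun k hk => (h k (by omega)).1,
              fun k hk => (h k (by omega)).2⟩
          · rintro ⟨h0, h1, h2⟩ k hk
            rcases (by omega : (k : ℕ) < t ∨ (k : ℕ) = t) with h | h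
            · exact ⟨h1 k (by omega), h2 k h⟩
            · have hkτ : k = ⟨t, htK⟩ := Fin.ext h
              subst hkτ
              exact ⟨h1 _ (by omega), h0⟩
        by_cases hD : P (Lpast L t (Function.update l ⟨t, htK⟩ x) ∩ Apast A t b) = 0
        · have hC0 : P (Cpre L A (K - n) (Function.update l ⟨t, htK⟩ x) b) = 0 :=
            measure_mono_null (by rw [hCD]; exact Set.inter_subset_right) hD
          simp [hC0, hD]
        · have hpos : 0 < P (Lpast L t (Function.update l ⟨t, htK⟩ x) ∩ Apast A t b) := zero_lt_iff.2 hD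
          have hden := hA3 ⟨t, htK⟩ (b ⟨t, htK⟩) (Function.update l ⟨t, htK⟩ x) b hpos
          rw [hCD]
          exact cP_div hden
      _ = (P (Cpre L A t l b)).toReal := by
        have hDx : ∀ x : 𝓛, Lpast L t (Function.update l ⟨t, htK⟩ x) ∩ Apast A t b
            = Cpre L A t l b ∩ {ω | L ⟨t, htK⟩ ω = x} := by
          intro x
          ext ω
          simp only [Cpre, Lpast, Apast, Set.mem_inter_iff, Set.mem_setOf_eq]
          constructor
          · rintro ⟨h1, h2⟩
            refine ⟨fun k hk => ⟨?_, h2 k hk⟩, ?_⟩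
            · have := h1 k (by omega)
              rwa [Function.update_of_ne (hne k hk)] at this
            · have := h1 ⟨t, htK⟩ (by exact le_refl t)
              rwa [Function.update_self] at this
          · rintro ⟨h1, h2⟩
            refine ⟨fun k hk => ?_, fun k hk => (h1 k hk).2⟩
            rcases (by omega : (k : ℕ) < t ∨ (k : ℕ) = t) with h | h
            · rw [Function.update_of_ne (hne k h)]
              exact (h1 k h).1
            · have hkτ : k = ⟨t, htK⟩ := Fin.ext h
              subst hkτ
              rw [Function.update_self]
              exact h2
        rw [Finset.sum_congr rfl fun x _ => by rw [hDx x]]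
        exact sum_measure_fiber P (ms_Cpre hL hA t l b) (hL ⟨t, htK⟩)

section Main

variable (P : Measure Ω) [IsProbabilityMeasure P]
  (A : Fin K → Ω → Bool) (L : Fin K → Ω → 𝓛)

lemma integral_cells
    (hA : ∀ k, Measurable (A k)) (hL : ∀ k, Measurable (L k))
    (m : ℕ) (as : Fin K → Bool) (W : Ω → ℝ) (val : (Fin K → 𝓛) → (Fin K → Bool) → ℝ)
    (hW : ∀ g b, ∀ ω ∈ Cpre L A K g b, W ω = val g b) :
    (∫ ω in EtrV A m as, W ω ∂P) =
      ∑ b ∈ Finset.univ.filter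
          (fun b : Fin K → Bool => ∀ k : Fin K, K - m ≤ (k : ℕ) → b k = as k),
        ∑ g : Fin K → 𝓛, val g b * (P (Cpre L A K g b)).toReal := by
  classical
  set T := (Finset.univ.filter
      (fun b : Fin K → Bool => ∀ k : Fin K, K - m ≤ (k : ℕ) → b k = as k)) ×ˢ
      (Finset.univ : Finset (Fin K → 𝓛)) with hT
  have hms : ∀ p : (Fin K → Bool) × (Fin K → 𝓛), MeasurableSet (Cpre L A K p.2 p.1) :=
    fun p => ms_Cpre hL hA K p.2 p.1
  have hun : EtrV A m as = ⋃ p ∈ T, Cpre L A K p.2 p.1 := by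
    ext ω
    simp only [Set.mem_iUnion, exists_prop, hT, Finset.mem_product, Finset.mem_filter,
      Finset.mem_univ, true_and, and_true, EtrV, Cpre, Set.mem_setOf_eq]
    constructor
    · intro h
      exact ⟨(fun k => A k ω, fun k => L k ω), fun k hk => h k hk, fun k _ => ⟨rfl, rfl⟩⟩
    · rintro ⟨p, hp, hmem⟩ k hk
      rw [(hmem k k.isLt).2]
      exact hp k hk
  have hdis : (↑T : Set ((Fin K → Bool) × (Fin K → 𝓛))).Pairwise
      (Function.onFun Disjoint fun p : (Fin K → Bool) × (Fin K → 𝓛) => Cpre L A K p.2 p.1) := by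
    intro p _ q _ hpq
    refine Set.disjoint_left.2 ?_
    intro ω h1 h2
    apply hpq
    have hb : p.1 = q.1 := funext fun k => ((h1 k k.isLt).2).symm.trans (h2 k k.isLt).2
    have hg : p.2 = q.2 := funext fun k => ((h1 k k.isLt).1).symm.trans (h2 k k.isLt).1
    exact Prod.ext hb hg
  have hint : ∀ p ∈ T, IntegrableOn W (Cpre L A K p.2 p.1) P := by
    intro p _
    refine ((integrableOn_const_iff (C := val p.2 p.1)).2 (Or.inr (measure_lt_top _ _))).congr_fun ?_ (hms p)
    exact fun ω hω => (hW p.2 p.1 ω hω).symm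
  rw [hun, integral_biUnion_finset T (fun p _ => hms p) hdis hint, Finset.sum_product]
  refine Finset.sum_congr rfl fun b _ => Finset.sum_congr rfl fun g _ => ?_
  rw [setIntegral_congr_fun (hms (b, g)) (fun ω hω => hW g b ω hω), setIntegral_const,
    smul_eq_mul, mul_comm, Measure.real]

lemma Wsw_const (g : Fin K → 𝓛) (b : Fin K → Bool) (ω : Ω) (hω : ω ∈ Cpre L A K g b) :
    Wsw P A L ω = ∏ k : Fin K,
      cP P {ω' | A k ω' = b k} (Apast A (k : ℕ) b) /
        cP P {ω' | A k ω' = b k} (Lpast L (k : ℕ) g ∩ Apast A (k : ℕ) b) := by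
  have hA1 : ∀ k, A k ω = b k := fun k => (hω k k.isLt).2
  have hL1 : ∀ k, L k ω = g k := fun k => (hω k k.isLt).1
  have hA2 : (fun j => A j ω) = b := funext hA1
  have hL2 : (fun j => L j ω) = g := funext hL1
  simp only [Wsw, hA1, hA2, hL2]

lemma Wrsw_const (m : ℕ) (g : Fin K → 𝓛) (b : Fin K → Bool) (ω : Ω)
    (hω : ω ∈ Cpre L A K g b) :
    Wrsw P A L m ω = ∏ k ∈ Finset.univ.filter (fun k : Fin K => K - m ≤ (k : ℕ)),
      cP P {ω' | A k ω' = b k} (Aseg A (K - m) (k : ℕ) b) /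
        cP P {ω' | A k ω' = b k} (Lpast L (k : ℕ) g ∩ Apast A (k : ℕ) b) := by
  have hA1 : ∀ k, A k ω = b k := fun k => (hω k k.isLt).2
  have hL1 : ∀ k, L k ω = g k := fun k => (hω k k.isLt).1
  have hA2 : (fun j => A j ω) = b := funext hA1
  have hL2 : (fun j => L j ω) = g := funext hL1
  simp only [Wrsw, hA1, hA2, hL2]

lemma Wpsw_const (m : ℕ) (g : Fin K → 𝓛) (b : Fin K → Bool) (ω : Ω)
    (hω : ω ∈ Cpre L A K g b) :
    Wpsw P A L m ω = ∏ k ∈ Finset.univ.filter (fun k : Fin K => K - m ≤ (k : ℕ)),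
      cP P {ω' | A k ω' = b k} (Apast A (k : ℕ) b) /
        cP P {ω' | A k ω' = b k} (Lpast L (k : ℕ) g ∩ Apast A (k : ℕ) b) := by
  have hA1 : ∀ k, A k ω = b k := fun k => (hω k k.isLt).2
  have hL1 : ∀ k, L k ω = g k := fun k => (hω k k.isLt).1
  have hA2 : (fun j => A j ω) = b := funext hA1
  have hL2 : (fun j => L j ω) = g := funext hL1
  simp only [Wpsw, hA1, hA2, hL2]

end Main

end WeightNormAux

/-- Weight normalization: under (A3), `𝔼[1{A̲(K−m)=a̲} W] = P(A̲(K−m)=a̲)`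
for each of the three IP-weights. -/
theorem weight_normalization
    {Ω : Type*} [MeasurableSpace Ω] {𝓛 : Type*} [MeasurableSpace 𝓛]
    [Fintype 𝓛] [Nonempty 𝓛] [MeasurableSingletonClass 𝓛]
    (P : Measure Ω) [IsProbabilityMeasure P]
    {K m : ℕ} (hK : 1 ≤ K) (hm1 : 1 ≤ m) (hmK : m ≤ K)
    (A : Fin K → Ω → Bool) (L : Fin K → Ω → 𝓛)
    (hA : ∀ k, Measurable (A k)) (hL : ∀ k, Measurable (L k))
    (hA3 : A3ok P A L) :
    ∀ as : Fin K → Bool,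
      (∫ ω in EtrV A m as, Wsw P A L ω ∂P) = (P (EtrV A m as)).toReal ∧
      (∫ ω in EtrV A m as, Wrsw P A L m ω ∂P) = (P (EtrV A m as)).toReal ∧
      (∫ ω in EtrV A m as, Wpsw P A L m ω ∂P) = (P (EtrV A m as)).toReal := by
  intro as
  classical
  have hfinal : ∑ b ∈ Finset.univ.filter
      (fun b : Fin K → Bool => ∀ k : Fin K, K - m ≤ (k : ℕ) → b k = as k),
      (P (Apast A K b)).toReal = (P (EtrV A m as)).toReal := by
    refine Eq.trans (Finset.sum_congr rfl ?_)
      (sum_measure_partition P A hA (fun k : Fin K => (k : ℕ) < K - m) as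
        (ms_EtrV hA m as) _
        (fun v => by simp only [Finset.mem_filter, Finset.mem_univ, true_and, not_lt]))
    intro b hb
    have hb' : ∀ k : Fin K, K - m ≤ (k : ℕ) → b k = as k := (Finset.mem_filter.1 hb).2
    congr 2
    ext ω
    simp only [Apast, EtrV, Set.mem_inter_iff, Set.mem_setOf_eq]
    constructor
    · intro h
      exact ⟨fun k _ => h k k.isLt, fun k hk => (h k k.isLt).trans (hb' k hk)⟩
    · rintro ⟨h1, h2⟩ k _
      by_cases hk : (k : ℕ) < K - m
      · exact h1 k hk
      · rw [hb' k (not_lt.1 hk)]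
        exact h2 k (not_lt.1 hk)
  have hsumApast1 : ∑ b ∈ Finset.univ.filter
      (fun b : Fin K → Bool => ∀ k : Fin K, K - m ≤ (k : ℕ) → b k = as k),
      (P (Apast A (K - m) b)).toReal = 1 := by
    have h := sum_measure_partition P A hA (fun k : Fin K => (k : ℕ) < K - m) as
      (MeasurableSet.univ (α := Ω))
      (Finset.univ.filter
        (fun b : Fin K → Bool => ∀ k : Fin K, K - m ≤ (k : ℕ) → b k = as k))
      (fun v => by simp only [Finset.mem_filter, Finset.mem_univ, true_and, not_lt])
    simp only [Set.inter_univ] at h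
    exact Eq.trans (Eq.trans (Finset.sum_congr rfl fun b _ => rfl) h) (by simp)
  have hff : Finset.univ.filter (fun k : Fin K => K - m ≤ (k : ℕ) ∧ (k : ℕ) < K)
      = Finset.univ.filter (fun k : Fin K => K - m ≤ (k : ℕ)) := by
    ext k
    simp only [Finset.mem_filter, Finset.mem_univ, true_and]
    exact ⟨fun h => h.1, fun h => ⟨h, k.isLt⟩⟩
  have hsum_g : ∀ b : Fin K → Bool,
      ∑ g : Fin K → 𝓛, (P (Cpre L A K g b)).toReal /
        ∏ k ∈ Finset.univ.filter (fun k : Fin K => K - m ≤ (k : ℕ)),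
          cP P {ω' | A k ω' = b k} (Lpast L (k : ℕ) g ∩ Apast A (k : ℕ) b)
      = (P (Apast A (K - m) b)).toReal := by
    intro b
    set proj : (Fin K → 𝓛) → (Fin K → 𝓛) :=
      fun g k => if (k : ℕ) < K - m then g k else Classical.arbitrary 𝓛 with hproj
    rw [← Finset.sum_fiberwise Finset.univ proj
      (fun g => (P (Cpre L A K g b)).toReal /
        ∏ k ∈ Finset.univ.filter (fun k : Fin K => K - m ≤ (k : ℕ)),
          cP P {ω' | A k ω' = b k} (Lpast L (k : ℕ) g ∩ Apast A (k : ℕ) b))]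
    have hval : ∀ l : Fin K → 𝓛,
        (∑ g ∈ Finset.univ.filter (fun g => proj g = l),
          (P (Cpre L A K g b)).toReal /
            ∏ k ∈ Finset.univ.filter (fun k : Fin K => K - m ≤ (k : ℕ)),
              cP P {ω' | A k ω' = b k} (Lpast L (k : ℕ) g ∩ Apast A (k : ℕ) b))
        = if (∀ k : Fin K, ¬((k : ℕ) < K - m) → l k = Classical.arbitrary 𝓛)
            then (P (Cpre L A (K - m) l b)).toReal else 0 := by
      intro l
      by_cases hc : ∀ k : Fin K, ¬((k : ℕ) < K - m) → l k = Classical.arbitrary 𝓛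
      · rw [if_pos hc]
        have hfe : Finset.univ.filter (fun g : Fin K → 𝓛 => proj g = l)
            = Finset.univ.filter
                (fun g : Fin K → 𝓛 => ∀ k : Fin K, (k : ℕ) < K - m → g k = l k) := by
          ext g
          simp only [Finset.mem_filter, Finset.mem_univ, true_and]
          constructor
          · intro h k hk
            rw [← h, hproj]
            simp [hk]
          · intro h
            funext k
            by_cases hk : (k : ℕ) < K - m
            · rw [hproj]
              simp only [hk, if_true]
              exact h k hk
            · rw [hproj]
              simp only [hk, if_false]
              exact (hc k hk).symm
        rw [hfe]
        exact key_R P A L hA hL hA3 b m hmK l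
      · rw [if_neg hc]
        have hem : Finset.univ.filter (fun g : Fin K → 𝓛 => proj g = l) = ∅ := by
          ext g
          simp only [Finset.mem_filter, Finset.mem_univ, true_and, Finset.notMem_empty,
            iff_false]
          intro h
          apply hc
          intro k hk
          rw [← h, hproj]
          simp [hk]
        rw [hem, Finset.sum_empty]
    rw [Finset.sum_congr rfl fun l _ => hval l, ← Finset.sum_filter]
    have hC : ∀ l : Fin K → 𝓛, Cpre L A (K - m) l b
        = {ω | ∀ k : Fin K, (k : ℕ) < K - m → L k ω = l k} ∩ Apast A (K - m) b := by
      intro l; ext ω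
      simp only [Cpre, Apast, Set.mem_inter_iff, Set.mem_setOf_eq]
      constructor
      · intro h
        exact ⟨fun k hk => (h k hk).1, fun k hk => (h k hk).2⟩
      · rintro ⟨h1, h2⟩ k hk
        exact ⟨h1 k hk, h2 k hk⟩
    rw [Finset.sum_congr rfl fun l _ => by rw [hC l]]
    exact sum_measure_partition P L hL (fun k : Fin K => (k : ℕ) < K - m)
      (fun _ => Classical.arbitrary 𝓛) (ms_Apast hA (K - m) b) _
      (fun v => by simp only [Finset.mem_filter, Finset.mem_univ, true_and])
  refine ⟨?_, ?_, ?_⟩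
  · -- Wsw
    rw [integral_cells P A L hA hL m as (Wsw P A L)
      (fun g b => ∏ k : Fin K,
        cP P {ω' | A k ω' = b k} (Apast A (k : ℕ) b) /
          cP P {ω' | A k ω' = b k} (Lpast L (k : ℕ) g ∩ Apast A (k : ℕ) b))
      (fun g b ω hω => Wsw_const P A L g b ω hω)]
    refine Eq.trans (Finset.sum_congr rfl fun b hb => ?_) hfinal
    have hsplit : ∀ g : Fin K → 𝓛,
        (∏ k : Fin K, cP P {ω' | A k ω' = b k} (Apast A (k : ℕ) b) /
            cP P {ω' | A k ω' = b k} (Lpast L (k : ℕ) g ∩ Apast A (k : ℕ) b))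
          * (P (Cpre L A K g b)).toReal
        = (∏ k : Fin K, cP P {ω' | A k ω' = b k} (Apast A (k : ℕ) b)) *
            ((P (Cpre L A K g b)).toReal /
              ∏ k : Fin K,
                cP P {ω' | A k ω' = b k} (Lpast L (k : ℕ) g ∩ Apast A (k : ℕ) b)) := by
      intro g
      rw [Finset.prod_div_distrib, div_mul_eq_mul_div, mul_div_assoc]
    rw [Finset.sum_congr rfl fun g _ => hsplit g, ← Finset.mul_sum]
    have hu1 : Finset.univ.filter (fun k : Fin K => K - K ≤ (k : ℕ)) = Finset.univ := by
      ext k; simp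
    have hu2 : Finset.univ.filter
        (fun g : Fin K → 𝓛 => ∀ k : Fin K, (k : ℕ) < K - K →
          g k = (fun _ : Fin K => Classical.arbitrary 𝓛) k) = Finset.univ := by
      ext g; simp
    have hR := key_R P A L hA hL hA3 b K le_rfl (fun _ => Classical.arbitrary 𝓛)
    rw [hu2, hu1, Nat.sub_self] at hR
    have hC0 : Cpre L A 0 (fun _ => Classical.arbitrary 𝓛) b = Set.univ := by
      ext ω; simp [Cpre]
    rw [hC0] at hR
    simp only [measure_univ, ENNReal.toReal_one] at hR
    rw [hR, mul_one]
    have huf : Finset.univ.filter (fun k : Fin K => (k : ℕ) < K) = Finset.univ := by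
      ext k; simp [k.isLt]
    rw [← huf]
    exact tele_Apast P A b K le_rfl
  · -- Wrsw
    rw [integral_cells P A L hA hL m as (Wrsw P A L m)
      (fun g b => ∏ k ∈ Finset.univ.filter (fun k : Fin K => K - m ≤ (k : ℕ)),
        cP P {ω' | A k ω' = b k} (Aseg A (K - m) (k : ℕ) b) /
          cP P {ω' | A k ω' = b k} (Lpast L (k : ℕ) g ∩ Apast A (k : ℕ) b))
      (fun g b ω hω => Wrsw_const P A L m g b ω hω)]
    have hstep : ∀ b ∈ Finset.univ.filter
        (fun b : Fin K → Bool => ∀ k : Fin K, K - m ≤ (k : ℕ) → b k = as k),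
        (∑ g : Fin K → 𝓛,
          (∏ k ∈ Finset.univ.filter (fun k : Fin K => K - m ≤ (k : ℕ)),
            cP P {ω' | A k ω' = b k} (Aseg A (K - m) (k : ℕ) b) /
              cP P {ω' | A k ω' = b k} (Lpast L (k : ℕ) g ∩ Apast A (k : ℕ) b))
            * (P (Cpre L A K g b)).toReal)
        = (P (EtrV A m as)).toReal * (P (Apast A (K - m) b)).toReal := by
      intro b hb
      have hb' : ∀ k : Fin K, K - m ≤ (k : ℕ) → b k = as k := (Finset.mem_filter.1 hb).2
      have hsplit : ∀ g : Fin K → 𝓛,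
          (∏ k ∈ Finset.univ.filter (fun k : Fin K => K - m ≤ (k : ℕ)),
            cP P {ω' | A k ω' = b k} (Aseg A (K - m) (k : ℕ) b) /
              cP P {ω' | A k ω' = b k} (Lpast L (k : ℕ) g ∩ Apast A (k : ℕ) b))
            * (P (Cpre L A K g b)).toReal
          = (∏ k ∈ Finset.univ.filter (fun k : Fin K => K - m ≤ (k : ℕ)),
              cP P {ω' | A k ω' = b k} (Aseg A (K - m) (k : ℕ) b)) *
              ((P (Cpre L A K g b)).toReal /
                ∏ k ∈ Finset.univ.filter (fun k : Fin K => K - m ≤ (k : ℕ)),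
                  cP P {ω' | A k ω' = b k} (Lpast L (k : ℕ) g ∩ Apast A (k : ℕ) b)) := by
        intro g
        rw [Finset.prod_div_distrib, div_mul_eq_mul_div, mul_div_assoc]
      rw [Finset.sum_congr rfl fun g _ => hsplit g, ← Finset.mul_sum, hsum_g b]
      have htel := tele_Aseg P A b (K - m) K (by omega) le_rfl
      rw [hff] at htel
      rw [htel]
      have hEq : Aseg A (K - m) K b = EtrV A m as := by
        ext ω
        simp only [Aseg, EtrV, Set.mem_setOf_eq]
        constructor
        · intro h k hk
          rw [← hb' k hk]
          exact h k hk k.isLt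
        · intro h k hk _
          rw [hb' k hk]
          exact h k hk
      rw [hEq]
    rw [Finset.sum_congr rfl hstep, ← Finset.mul_sum, hsumApast1, mul_one]
  · -- Wpsw
    rw [integral_cells P A L hA hL m as (Wpsw P A L m)
      (fun g b => ∏ k ∈ Finset.univ.filter (fun k : Fin K => K - m ≤ (k : ℕ)),
        cP P {ω' | A k ω' = b k} (Apast A (k : ℕ) b) /
          cP P {ω' | A k ω' = b k} (Lpast L (k : ℕ) g ∩ Apast A (k : ℕ) b))
      (fun g b ω hω => Wpsw_const P A L m g b ω hω)]
    refine Eq.trans (Finset.sum_congr rfl fun b hb => ?_) hfinal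
    have hsplit : ∀ g : Fin K → 𝓛,
        (∏ k ∈ Finset.univ.filter (fun k : Fin K => K - m ≤ (k : ℕ)),
          cP P {ω' | A k ω' = b k} (Apast A (k : ℕ) b) /
            cP P {ω' | A k ω' = b k} (Lpast L (k : ℕ) g ∩ Apast A (k : ℕ) b))
          * (P (Cpre L A K g b)).toReal
        = (∏ k ∈ Finset.univ.filter (fun k : Fin K => K - m ≤ (k : ℕ)),
            cP P {ω' | A k ω' = b k} (Apast A (k : ℕ) b)) *
            ((P (Cpre L A K g b)).toReal /
              ∏ k ∈ Finset.univ.filter (fun k : Fin K => K - m ≤ (k : ℕ)),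
                cP P {ω' | A k ω' = b k} (Lpast L (k : ℕ) g ∩ Apast A (k : ℕ) b)) := by
      intro g
      rw [Finset.prod_div_distrib, div_mul_eq_mul_div, mul_div_assoc]
    rw [Finset.sum_congr rfl fun g _ => hsplit g, ← Finset.mul_sum, hsum_g b]
    have htel := tele_psw P A b (K - m) K (by omega) le_rfl
    rw [hff] at htel
    exact htel


end MSMPaper
end

section
/- IP-weighted identification for marginal structural models (consequence of equation (B.2.1)): Assume (A1)–(A3). Then for every ā ∈ {0,1}^K: 𝔼[1{Ā(K−1)=ā} · W_sw · Y] = P(Ā(K−1)=ā) · 𝔼[Y^{ā}]. -/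
open MeasureTheory Finset
open scoped Classical

namespace MSMPaper

set_option linter.unusedSectionVars false
set_option linter.unusedVariables false
set_option maxHeartbeats 1000000

noncomputable section AuxMSM

variable {Ω : Type*} [MeasurableSpace Ω] {𝓛 : Type*} [MeasurableSpace 𝓛]
  [Fintype 𝓛] [Nonempty 𝓛] [MeasurableSingletonClass 𝓛] {K : ℕ}

lemma cP_nonneg (P : Measure Ω) (E F : Set Ω) : 0 ≤ cP P E F :=
  div_nonneg ENNReal.toReal_nonneg ENNReal.toReal_nonneg

lemma measurableSet_Apast (A : Fin K → Ω → Bool) (hA : ∀ k, Measurable (A k))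
    (t : ℕ) (b : Fin K → Bool) : MeasurableSet (Apast A t b) := by
  have h : Apast A t b = ⋂ k : Fin K, ⋂ _ : (k : ℕ) < t, A k ⁻¹' {b k} := by
    ext ω; simp [Apast, Set.mem_iInter]
  rw [h]
  exact MeasurableSet.iInter fun k => MeasurableSet.iInter fun _ =>
    (hA k) (measurableSet_singleton _)

lemma measurableSet_Lpast (L : Fin K → Ω → 𝓛) (hL : ∀ k, Measurable (L k))
    (t : ℕ) (l : Fin K → 𝓛) : MeasurableSet (Lpast L t l) := by
  have h : Lpast L t l = ⋂ k : Fin K, ⋂ _ : (k : ℕ) ≤ t, L k ⁻¹' {l k} := by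
    ext ω; simp [Lpast, Set.mem_iInter]
  rw [h]
  exact MeasurableSet.iInter fun k => MeasurableSet.iInter fun _ =>
    (hL k) (measurableSet_singleton _)

lemma Apast_zero (A : Fin K → Ω → Bool) (b : Fin K → Bool) : Apast A 0 b = Set.univ := by
  ext ω; simp [Apast]

lemma Apast_succ (A : Fin K → Ω → Bool) {t : ℕ} (ht : t < K) (b : Fin K → Bool) :
    Apast A (t + 1) b = {ω | A ⟨t, ht⟩ ω = b ⟨t, ht⟩} ∩ Apast A t b := by
  ext ω
  constructor
  · intro h
    exact ⟨h ⟨t, ht⟩ (Nat.lt_succ_self t), fun k hk => h k (Nat.lt_succ_of_lt hk)⟩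
  · rintro ⟨h1, h2⟩ k hk
    rcases Nat.lt_succ_iff_lt_or_eq.1 hk with h | h
    · exact h2 k h
    · have hk' : k = ⟨t, ht⟩ := Fin.ext h
      rw [hk']; exact h1

lemma Apast_antitone (A : Fin K → Ω → Bool) {s t : ℕ} (hst : s ≤ t) (b : Fin K → Bool) :
    Apast A t b ⊆ Apast A s b := fun ω h k hk => h k (lt_of_lt_of_le hk hst)

lemma Lpast_congr (L : Fin K → Ω → 𝓛) {t : ℕ} {p q : Fin K → 𝓛}
    (h : ∀ k : Fin K, (k : ℕ) ≤ t → p k = q k) : Lpast L t p = Lpast L t q := by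
  ext ω
  constructor <;> intro hω k hk
  · rw [← h k hk]; exact hω k hk
  · rw [h k hk]; exact hω k hk

/-- Denominator factor of the weights, with treatments fixed to `a`. -/
def ddM (P : Measure Ω) (A : Fin K → Ω → Bool) (L : Fin K → Ω → 𝓛) (a : Fin K → Bool)
    (k : Fin K) (p : Fin K → 𝓛) : ℝ :=
  cP P {ω | A k ω = a k} (Lpast L (k : ℕ) p ∩ Apast A (k : ℕ) a)

/-- Product of inverse denominator factors for times `< t`. -/
def WbarM (P : Measure Ω) (A : Fin K → Ω → Bool) (L : Fin K → Ω → 𝓛) (a : Fin K → Bool)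
    (t : ℕ) (p : Fin K → 𝓛) : ℝ :=
  ∏ k ∈ Finset.univ.filter (fun k : Fin K => (k : ℕ) < t), (ddM P A L a k p)⁻¹

lemma WbarM_congr (P : Measure Ω) (A : Fin K → Ω → Bool) (L : Fin K → Ω → 𝓛)
    (a : Fin K → Bool) {t : ℕ} {p q : Fin K → 𝓛}
    (h : ∀ k : Fin K, (k : ℕ) < t → p k = q k) :
    WbarM P A L a t p = WbarM P A L a t q := by
  unfold WbarM
  refine Finset.prod_congr rfl fun k hk => ?_
  have hk' : (k : ℕ) < t := by simpa using hk
  unfold ddM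
  congr 1
  rw [Lpast_congr L fun j hj => h j (lt_of_le_of_lt hj hk')]

lemma WbarM_zero (P : Measure Ω) (A : Fin K → Ω → Bool) (L : Fin K → Ω → 𝓛)
    (a : Fin K → Bool) (p : Fin K → 𝓛) : WbarM P A L a 0 p = 1 := by
  unfold WbarM
  rw [Finset.filter_false_of_mem (fun k _ => by omega), Finset.prod_empty]

lemma filter_lt_succ {t : ℕ} (ht : t < K) :
    (Finset.univ.filter (fun k : Fin K => (k : ℕ) < t + 1)) =
      insert ⟨t, ht⟩ (Finset.univ.filter (fun k : Fin K => (k : ℕ) < t)) := by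
  ext k
  simp only [Finset.mem_filter, Finset.mem_univ, true_and, Finset.mem_insert, Fin.ext_iff]
  omega

lemma WbarM_succ (P : Measure Ω) (A : Fin K → Ω → Bool) (L : Fin K → Ω → 𝓛)
    (a : Fin K → Bool) {t : ℕ} (ht : t < K) (p : Fin K → 𝓛) :
    WbarM P A L a (t + 1) p = (ddM P A L a ⟨t, ht⟩ p)⁻¹ * WbarM P A L a t p := by
  unfold WbarM
  rw [filter_lt_succ ht, Finset.prod_insert (by simp)]

/-- Normalization of a covariate-history vector: junk beyond time `t`. -/
def nrmM (t : ℕ) (p : Fin K → 𝓛) : Fin K → 𝓛 :=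
  fun k => if (k : ℕ) ≤ t then p k else Classical.arbitrary 𝓛

/-- The finitely many level-`t` covariate atoms. -/
def atomsM (𝓛 : Type*) [Fintype 𝓛] [Nonempty 𝓛] (K t : ℕ) : Finset (Fin K → 𝓛) :=
  Finset.univ.image (nrmM t)

lemma mem_atomsM_iff {t : ℕ} {p : Fin K → 𝓛} :
    p ∈ atomsM 𝓛 K t ↔ ∀ k : Fin K, t < (k : ℕ) → p k = Classical.arbitrary 𝓛 := by
  constructor
  · intro hp k hk
    obtain ⟨q, -, rfl⟩ := Finset.mem_image.1 hp
    simp [nrmM, Nat.not_le_of_lt hk]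
  · intro h
    refine Finset.mem_image.2 ⟨p, Finset.mem_univ _, ?_⟩
    funext k
    by_cases hk : (k : ℕ) ≤ t
    · simp [nrmM, hk]
    · simp [nrmM, hk, h k (Nat.lt_of_not_le hk)]

lemma nrmM_mem (t : ℕ) (q : Fin K → 𝓛) : nrmM t q ∈ atomsM 𝓛 K t :=
  Finset.mem_image.2 ⟨q, Finset.mem_univ _, rfl⟩

lemma mem_Lpast_nrmM (L : Fin K → Ω → 𝓛) (t : ℕ) (ω : Ω) :
    ω ∈ Lpast L t (nrmM t (fun j => L j ω)) := by
  intro k hk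
  simp [nrmM, hk]

lemma atomsM_disjoint (L : Fin K → Ω → 𝓛) {t : ℕ} {p q : Fin K → 𝓛}
    (hp : p ∈ atomsM 𝓛 K t) (hq : q ∈ atomsM 𝓛 K t) (hne : p ≠ q) :
    Disjoint (Lpast L t p) (Lpast L t q) := by
  rw [Set.disjoint_left]
  intro ω hωp hωq
  apply hne
  funext k
  by_cases hk : (k : ℕ) ≤ t
  · rw [← hωp k hk, ← hωq k hk]
  · rw [mem_atomsM_iff.1 hp k (Nat.lt_of_not_le hk),
      mem_atomsM_iff.1 hq k (Nat.lt_of_not_le hk)]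

/-- Decomposition of a set integral over level-`t` covariate atoms. -/
lemma decompM (P : Measure Ω) [IsFiniteMeasure P] (L : Fin K → Ω → 𝓛)
    (hL : ∀ k, Measurable (L k)) (t : ℕ) {f : Ω → ℝ} (hf : Integrable f P)
    {E : Set Ω} (hE : MeasurableSet E) :
    ∫ ω in E, f ω ∂P = ∑ p ∈ atomsM 𝓛 K t, ∫ ω in Lpast L t p ∩ E, f ω ∂P := by
  have hcov : (⋃ p ∈ atomsM 𝓛 K t, (Lpast L t p ∩ E)) = E := by
    apply Set.Subset.antisymm
    · simp only [Set.iUnion_subset_iff]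
      intro p _
      exact Set.inter_subset_right
    · intro ω hω
      exact Set.mem_biUnion (nrmM_mem t fun j => L j ω) ⟨mem_Lpast_nrmM L t ω, hω⟩
  conv_lhs => rw [← hcov]
  refine integral_biUnion_finset _ (fun p _ => (measurableSet_Lpast L hL t p).inter hE)
    ?_ (fun p _ => hf.integrableOn)
  intro p hp q hq hne
  exact (atomsM_disjoint L hp hq hne).mono Set.inter_subset_left Set.inter_subset_left

/-- From distributional conditional independence, factorize a conditional expectation. -/
lemma factor_step (P : Measure Ω) [IsFiniteMeasure P] {g : Ω → ℝ} (hg : Measurable g)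
    {Av F : Set Ω} (hAv : MeasurableSet Av) (hF : MeasurableSet F) (hFpos : 0 < P F)
    (hyp : ∀ B : Set ℝ, MeasurableSet B →
      cP P ((g ⁻¹' B) ∩ Av) F = cP P (g ⁻¹' B) F * cP P Av F) :
    ∫ ω in Av ∩ F, g ω ∂P = cP P Av F * ∫ ω in F, g ω ∂P := by
  set c : ℝ := cP P Av F with hc
  have hc0 : 0 ≤ c := cP_nonneg P Av F
  have hFne : (P F).toReal ≠ 0 :=
    (ENNReal.toReal_pos hFpos.ne' (measure_ne_top P F)).ne'
  have hmeas : ∀ B : Set ℝ, MeasurableSet B →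
      P ((g ⁻¹' B) ∩ (Av ∩ F)) = ENNReal.ofReal c * P ((g ⁻¹' B) ∩ F) := by
    intro B hB
    have h1 := hyp B hB
    unfold cP at h1
    rw [div_eq_iff hFne] at h1
    have h2 : (P ((g ⁻¹' B) ∩ Av ∩ F)).toReal = c * (P ((g ⁻¹' B) ∩ F)).toReal := by
      rw [h1]; field_simp
    rw [← Set.inter_assoc]
    refine (ENNReal.toReal_eq_toReal_iff' (measure_ne_top _ _)
      (ENNReal.mul_ne_top ENNReal.ofReal_ne_top (measure_ne_top _ _))).1 ?_
    rw [ENNReal.toReal_mul, ENNReal.toReal_ofReal hc0]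
    exact h2
  have hmap : (P.restrict (Av ∩ F)).map g = (ENNReal.ofReal c) • ((P.restrict F).map g) := by
    ext B hB
    rw [Measure.map_apply hg hB, Measure.smul_apply, Measure.map_apply hg hB,
      Measure.restrict_apply (hg hB), Measure.restrict_apply (hg hB), smul_eq_mul]
    exact hmeas B hB
  calc ∫ ω in Av ∩ F, g ω ∂P
      = ∫ x, x ∂((P.restrict (Av ∩ F)).map g) :=
        (integral_map hg.aemeasurable aestronglyMeasurable_id).symm
    _ = ∫ x, x ∂((ENNReal.ofReal c) • ((P.restrict F).map g)) := by rw [hmap]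
    _ = c * ∫ x, x ∂((P.restrict F).map g) := by
        rw [integral_smul_measure, ENNReal.toReal_ofReal hc0, smul_eq_mul]
    _ = c * ∫ ω in F, g ω ∂P := by
        congr 1
        exact integral_map hg.aemeasurable aestronglyMeasurable_id

/-- Positivity chain: every partial treatment history event has positive probability. -/
lemma pos_chain (P : Measure Ω) [IsProbabilityMeasure P]
    (A : Fin K → Ω → Bool) (L : Fin K → Ω → 𝓛) (hA3 : A3ok P A L) (a : Fin K → Bool) :
    ∀ t, t ≤ K → 0 < P (Apast A t a) := by
  intro t
  induction t with
  | zero =>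
    intro _
    rw [Apast_zero]
    simp
  | succ t ih =>
    intro ht
    have ht' : t < K := ht
    have h1 : 0 < P (Apast A t a) := ih ht'.le
    have hex : ∃ p : Fin K → 𝓛, 0 < P (Lpast L t p ∩ Apast A t a) := by
      by_contra hcon
      push_neg at hcon
      have hcov : Apast A t a ⊆ ⋃ p : Fin K → 𝓛, (Lpast L t p ∩ Apast A t a) := fun ω hω =>
        Set.mem_iUnion.2 ⟨nrmM t fun j => L j ω, mem_Lpast_nrmM L t ω, hω⟩
      have hnull : P (⋃ p : Fin K → 𝓛, (Lpast L t p ∩ Apast A t a)) = 0 :=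
        measure_iUnion_null fun p => nonpos_iff_eq_zero.1 (hcon p)
      exact absurd (measure_mono_null hcov hnull) h1.ne'
    obtain ⟨p, hppos⟩ := hex
    have h3 := hA3 ⟨t, ht'⟩ (a ⟨t, ht'⟩) p a hppos
    have hnum : 0 < P ({ω | A ⟨t, ht'⟩ ω = a ⟨t, ht'⟩} ∩ (Lpast L t p ∩ Apast A t a)) := by
      by_contra hz
      push_neg at hz
      have hz' : P ({ω | A ⟨t, ht'⟩ ω = a ⟨t, ht'⟩} ∩ (Lpast L t p ∩ Apast A t a)) = 0 :=
        nonpos_iff_eq_zero.1 hz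
      rw [cP, hz'] at h3
      simp at h3
    refine lt_of_lt_of_le hnum (measure_mono ?_)
    rintro ω ⟨hω1, hω2, hω3⟩
    rw [Apast_succ A ht']
    exact ⟨hω1, hω3⟩

/-- Telescoping product of numerator factors. -/
lemma telescopeM (P : Measure Ω) [IsProbabilityMeasure P] (A : Fin K → Ω → Bool)
    (a : Fin K → Bool) (hpos : ∀ t, t ≤ K → 0 < P (Apast A t a)) :
    ∀ t, t ≤ K →
      (∏ k ∈ Finset.univ.filter (fun k : Fin K => (k : ℕ) < t),
        cP P {ω | A k ω = a k} (Apast A (k : ℕ) a)) = (P (Apast A t a)).toReal := by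
  intro t
  induction t with
  | zero =>
    intro _
    rw [Finset.filter_false_of_mem (fun k _ => by omega), Finset.prod_empty, Apast_zero]
    simp
  | succ t ih =>
    intro ht
    have ht' : t < K := ht
    rw [filter_lt_succ ht', Finset.prod_insert (by simp), mul_comm, ih ht'.le]
    have hne : (P (Apast A t a)).toReal ≠ 0 :=
      (ENNReal.toReal_pos (hpos t ht'.le).ne' (measure_ne_top _ _)).ne'
    rw [cP, mul_div_assoc']
    rw [mul_comm, mul_div_assoc, div_self hne, mul_one]
    have hs : {ω | A ⟨t, ht'⟩ ω = a ⟨t, ht'⟩} ∩ Apast A ((⟨t, ht'⟩ : Fin K) : ℕ) a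
        = Apast A (t + 1) a := (Apast_succ A ht' a).symm
    rw [hs]

/-- Integrability of the weighted integrand. -/
lemma integrable_WgM (P : Measure Ω) [IsFiniteMeasure P] (L : Fin K → Ω → 𝓛)
    (hL : ∀ k, Measurable (L k)) (W : (Fin K → 𝓛) → ℝ) {g : Ω → ℝ}
    (hgi : Integrable g P) :
    Integrable (fun ω => W (fun j => L j ω) * g ω) P := by
  refine hgi.bdd_mul (c := (Finset.univ.image (fun p : Fin K → 𝓛 => ‖W p‖)).max'
    ((Finset.univ_nonempty (α := Fin K → 𝓛)).image _)) ?_ ?_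
  · exact (Measurable.of_discrete.comp (measurable_pi_lambda _ hL)).aestronglyMeasurable
  · set s : Finset ℝ := Finset.univ.image (fun p : Fin K → 𝓛 => ‖W p‖) with hs
    have hsne : s.Nonempty := (Finset.univ_nonempty (α := Fin K → 𝓛)).image _
    refine Filter.Eventually.of_forall fun ω => ?_
    exact Finset.le_max' s _ (Finset.mem_image_of_mem _ (Finset.mem_univ _))

/-- The key backward induction (g-formula telescoping). -/
lemma keyM (P : Measure Ω) [IsProbabilityMeasure P]
    (A : Fin K → Ω → Bool) (L : Fin K → Ω → 𝓛)
    (hA : ∀ k, Measurable (A k)) (hL : ∀ k, Measurable (L k))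
    (Ypot : (Fin K → Bool) → Ω → ℝ)
    (hYpm : ∀ a, Measurable (Ypot a)) (hYpi : ∀ a, Integrable (Ypot a) P)
    (hA2 : A2ok P A L Ypot) (hA3 : A3ok P A L) (a : Fin K → Bool) :
    ∀ t, t ≤ K →
      (∫ ω in Apast A t a, WbarM P A L a t (fun j => L j ω) * Ypot a ω ∂P) =
        ∫ ω, Ypot a ω ∂P := by
  intro t
  induction t with
  | zero =>
    intro _
    rw [Apast_zero]
    simp only [WbarM_zero, one_mul, Measure.restrict_univ]
  | succ t ih =>
    intro ht
    have ht' : t < K := ht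
    have hint : ∀ s : ℕ,
        Integrable (fun ω => WbarM P A L a s (fun j => L j ω) * Ypot a ω) P :=
      fun s => integrable_WgM P L hL _ (hYpi a)
    rw [decompM P L hL t (hint (t + 1)) (measurableSet_Apast A hA (t + 1) a)]
    have hstep : ∀ p ∈ atomsM 𝓛 K t,
        (∫ ω in Lpast L t p ∩ Apast A (t + 1) a,
            WbarM P A L a (t + 1) (fun j => L j ω) * Ypot a ω ∂P)
          = ∫ ω in Lpast L t p ∩ Apast A t a,
              WbarM P A L a t (fun j => L j ω) * Ypot a ω ∂P := by
      intro p hp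
      have hLm := measurableSet_Lpast L hL t p
      have hcongr : ∀ s : ℕ, s ≤ t + 1 → ∀ ω ∈ Lpast L t p,
          WbarM P A L a s (fun j => L j ω) = WbarM P A L a s p := by
        intro s hs ω hω
        exact WbarM_congr P A L a fun k hk => hω k (by omega)
      rw [setIntegral_congr_fun (hLm.inter (measurableSet_Apast A hA (t + 1) a))
          (g := fun ω => WbarM P A L a (t + 1) p * Ypot a ω)
          (fun ω hω => by rw [hcongr (t + 1) le_rfl ω hω.1]),
        setIntegral_congr_fun (hLm.inter (measurableSet_Apast A hA t a))
          (g := fun ω => WbarM P A L a t p * Ypot a ω)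
          (fun ω hω => by rw [hcongr t (by omega) ω hω.1]),
        integral_const_mul, integral_const_mul]
      by_cases hppos : 0 < P (Lpast L t p ∩ Apast A t a)
      · have hset : Lpast L t p ∩ Apast A (t + 1) a
            = {ω | A ⟨t, ht'⟩ ω = a ⟨t, ht'⟩} ∩ (Lpast L t p ∩ Apast A t a) := by
          rw [Apast_succ A ht']
          ext ω
          constructor
          · rintro ⟨h1, h2, h3⟩; exact ⟨h2, h1, h3⟩
          · rintro ⟨h1, h2, h3⟩; exact ⟨h2, h1, h3⟩
        have hfac := factor_step P (g := Ypot a)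
          (Av := {ω | A ⟨t, ht'⟩ ω = a ⟨t, ht'⟩}) (hYpm a)
          (hA ⟨t, ht'⟩ (measurableSet_singleton _))
          (hLm.inter (measurableSet_Apast A hA t a)) hppos
          (fun B hB => hA2 ⟨t, ht'⟩ a B hB (a ⟨t, ht'⟩) p a hppos)
        rw [hset, hfac, WbarM_succ P A L a ht' p]
        have hdpos : 0 < ddM P A L a ⟨t, ht'⟩ p := hA3 ⟨t, ht'⟩ (a ⟨t, ht'⟩) p a hppos
        have hdd : cP P {ω | A ⟨t, ht'⟩ ω = a ⟨t, ht'⟩} (Lpast L t p ∩ Apast A t a)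
            = ddM P A L a ⟨t, ht'⟩ p := rfl
        rw [hdd]
        have hdne : ddM P A L a ⟨t, ht'⟩ p ≠ 0 := hdpos.ne'
        field_simp
      · have h0 : P (Lpast L t p ∩ Apast A t a) = 0 := nonpos_iff_eq_zero.1 (not_lt.1 hppos)
        have h0' : P (Lpast L t p ∩ Apast A (t + 1) a) = 0 :=
          measure_mono_null
            (Set.inter_subset_inter_right _ (Apast_antitone A (Nat.le_succ t) a)) h0
        rw [show P.restrict (Lpast L t p ∩ Apast A (t + 1) a) = 0 from
            Measure.restrict_eq_zero.2 h0',
          show P.restrict (Lpast L t p ∩ Apast A t a) = 0 from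
            Measure.restrict_eq_zero.2 h0,
          ]
        simp
    rw [Finset.sum_congr rfl hstep,
      ← decompM P L hL t (hint t) (measurableSet_Apast A hA t a)]
    exact ih ht'.le

end AuxMSM

/-- IP-weighted identification for MSMs: under (A1)–(A3),
`𝔼[1{Ā(K−1)=ā} W_sw Y] = P(Ā(K−1)=ā) · 𝔼[Y^{ā}]`. -/
theorem msm_identification
    {Ω : Type*} [MeasurableSpace Ω] {𝓛 : Type*} [MeasurableSpace 𝓛]
    [Fintype 𝓛] [Nonempty 𝓛] [MeasurableSingletonClass 𝓛]
    (P : Measure Ω) [IsProbabilityMeasure P]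
    {K : ℕ} (hK : 1 ≤ K)
    (A : Fin K → Ω → Bool) (L : Fin K → Ω → 𝓛)
    (hA : ∀ k, Measurable (A k)) (hL : ∀ k, Measurable (L k))
    (Y : Ω → ℝ) (hY : Measurable Y)
    (Ypot : (Fin K → Bool) → Ω → ℝ)
    (hYpm : ∀ a, Measurable (Ypot a)) (hYpi : ∀ a, Integrable (Ypot a) P)
    (hA1 : A1ok A Y Ypot) (hA2 : A2ok P A L Ypot) (hA3 : A3ok P A L) :
    ∀ a : Fin K → Bool,
      (∫ ω in Apast A K a, Wsw P A L ω * Y ω ∂P) =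
        (P (Apast A K a)).toReal * ∫ ω, Ypot a ω ∂P := by
  intro a
  have hpos := pos_chain P A L hA3 a
  have hmK : MeasurableSet (Apast A K a) := measurableSet_Apast A hA K a
  have hEq : ∀ ω ∈ Apast A K a,
      Wsw P A L ω * Y ω =
        (P (Apast A K a)).toReal * (WbarM P A L a K (fun j => L j ω) * Ypot a ω) := by
    intro ω hω
    have hω' : ∀ k : Fin K, A k ω = a k := fun k => hω k k.isLt
    have hY' : Y ω = Ypot a ω := hA1 a ω hω'
    have hW : Wsw P A L ω = (P (Apast A K a)).toReal * WbarM P A L a K (fun j => L j ω) := by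
      have h1 : Wsw P A L ω = ∏ k : Fin K,
          cP P {ω' | A k ω' = a k} (Apast A (k : ℕ) a) * (ddM P A L a k (fun j => L j ω))⁻¹ := by
        unfold Wsw ddM
        refine Finset.prod_congr rfl fun k _ => ?_
        rw [div_eq_mul_inv]
        simp only [hω']
      rw [h1, Finset.prod_mul_distrib]
      congr 1
      · rw [← telescopeM P A a hpos K le_rfl]
        refine (Finset.prod_congr ?_ fun k _ => rfl)
        ext k
        simp [k.isLt]
      · unfold WbarM
        refine (Finset.prod_congr ?_ fun k _ => rfl).symm
        ext k
        simp [k.isLt]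
    rw [hW, hY']
    ring
  rw [setIntegral_congr_fun hmK hEq]
  have hint : Integrable (fun ω => WbarM P A L a K (fun j => L j ω) * Ypot a ω) P :=
    integrable_WgM P L hL _ (hYpi a)
  rw [integral_const_mul]
  congr 1
  calc (∫ ω in Apast A K a, WbarM P A L a K (fun j => L j ω) * Ypot a ω ∂P)
      = ∫ ω, Ypot a ω ∂P := keyM P A L hA hL Ypot hYpm hYpi hA2 hA3 a K le_rfl


end MSMPaper
end
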